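/- Under the hypotheses of the monotone iterative theorem (f one-sided Lipschitz with P(n) > 0, K(n) < 1; α a lower and β an upper solution with α ≤ β on ℤ[n₀,N]), if u is any solution of u(n+1) = f(n,u(n),u(n+1)), u(n₀) = x₀ with α(n) ≤ u(n) ≤ β(n) for all n, and α^{(j+1)} = Qα^{(j)} as in the iteration, then α^{(j)}(n) ≤ u(n) for all j and all n in [n₀,N]. -/

import Mathlib

/-- Minimality: the lower-solution iterates stay below every solution between
the lower and upper solutions (impulse-free case). -/
theorem stmt_17 (n₀ N : ℤ) (f : ℤ → ℝ → ℝ → ℝ) (P K : ℤ → ℝ) (x₀ : ℝ)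
    (hP : ∀ n : ℤ, n₀ ≤ n → n ≤ N - 1 → P n > 0)
    (hK : ∀ n : ℤ, n₀ ≤ n → n ≤ N - 1 → K n < 1)
    (hf : ∀ n : ℤ, n₀ ≤ n → n ≤ N - 1 → ∀ x₁ x₂ x₃ x₄ : ℝ, x₁ ≤ x₂ → x₃ ≤ x₄ →
      f n x₁ x₃ - f n x₂ x₄ ≤ P n * (x₁ - x₂) + K n * (x₃ - x₄))
    (α β u : ℤ → ℝ)
    (hαlow : ∀ n : ℤ, n₀ ≤ n → n ≤ N - 1 → α (n + 1) ≤ f n (α n) (α (n + 1)))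
    (hα0 : α n₀ ≤ x₀)
    (hβup : ∀ n : ℤ, n₀ ≤ n → n ≤ N - 1 → β (n + 1) ≥ f n (β n) (β (n + 1)))
    (hβ0 : x₀ ≤ β n₀)
    (hαβ : ∀ n : ℤ, n₀ ≤ n → n ≤ N → α n ≤ β n)
    (hsol : ∀ n : ℤ, n₀ ≤ n → n ≤ N - 1 → u (n + 1) = f n (u n) (u (n + 1)))
    (hu0 : u n₀ = x₀)
    (hαu : ∀ n : ℤ, n₀ ≤ n → n ≤ N → α n ≤ u n)
    (huβ : ∀ n : ℤ, n₀ ≤ n → n ≤ N → u n ≤ β n)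
    (A : ℕ → ℤ → ℝ)
    (hA0 : ∀ n : ℤ, A 0 n = α n)
    (hAinit : ∀ j : ℕ, A (j + 1) n₀ = x₀)
    (hAeq : ∀ j : ℕ, ∀ n : ℤ, n₀ ≤ n → n ≤ N - 1 →
      A (j + 1) (n + 1) = P n * A (j + 1) n + K n * A (j + 1) (n + 1)
        + f n (A j n) (A j (n + 1)) - P n * A j n - K n * A j (n + 1)) :
    ∀ j : ℕ, ∀ n : ℤ, n₀ ≤ n → n ≤ N → A j n ≤ u n := by
  intro j
  induction j with
  | zero => intro n hn hN; rw [hA0]; exact hαu n hn hN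
  | succ j ih =>
    have key : ∀ n : ℤ, n₀ ≤ n → (n ≤ N → A (j + 1) n ≤ u n) := by
      refine fun n hn => Int.le_induction (motive := fun n _ => n ≤ N → A (j + 1) n ≤ u n) ?_ ?_ n hn
      · intro _; rw [hAinit, hu0]
      · intro n hn ih2 hN
        have hn1 : n ≤ N - 1 := by omega
        have hprev : A (j + 1) n ≤ u n := ih2 (by omega)
        have husol := hsol n hn hn1
        have hAe := hAeq j n hn hn1
        have hfle := hf n hn hn1 (A j n) (u n) (A j (n + 1)) (u (n + 1))
          (ih n hn (by omega)) (ih (n + 1) (by omega) hN)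
        have hPn := hP n hn hn1
        have hKn := hK n hn hn1
        nlinarith [mul_nonneg hPn.le (sub_nonneg.2 hprev),
          mul_nonneg (sub_nonneg.2 hKn.le) (sub_nonneg.2 hprev)]
    exact key
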